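/- Every odd uniform army of caterpillars admits an edge-magic labeling. -/

import Mathlib

/-- An edge-magic labeling of an `n`-vertex graph `G` with `m` edges and magic constant `k`:
a bijection `f : V ∪ E → {1,…,n+m}` with `f(u)+f(v)+f(uv) = k` for every edge `uv`. -/
def IsEdgeMagicLabeling {V : Type*} [Fintype V] (G : SimpleGraph V)
    (f : V ⊕ ↥G.edgeSet → ℕ) (k : ℕ) : Prop :=
  Set.BijOn f Set.univ (Set.Icc 1 (Fintype.card V + G.edgeSet.ncard)) ∧
  ∀ (u v : V) (h : G.Adj u v),
    f (Sum.inl u) + f (Sum.inl v) + f (Sum.inr ⟨s(u, v), (G.mem_edgeSet).mpr h⟩) = k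

/-- A caterpillar: a tree having a path such that every vertex is on the path or adjacent
to a vertex of the path. -/
def IsCaterpillar {V : Type*} (G : SimpleGraph V) : Prop :=
  G.IsTree ∧ ∃ (a b : V) (W : G.Walk a b), W.IsPath ∧
    ∀ v : V, v ∈ W.support ∨ ∃ u ∈ W.support, G.Adj u v

/-- A bipartite graph has type `(r, s)` if the two parts of its bipartition have sizes
`r` and `s` with `r ≤ s`. -/
def HasType {V : Type*} (G : SimpleGraph V) (r s : ℕ) : Prop :=
  r ≤ s ∧ ∃ A : Set V, A.ncard = r ∧ Aᶜ.ncard = s ∧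
    ∀ u v : V, G.Adj u v → (u ∈ A ↔ v ∉ A)

private lemma block_inj {t x y a b : ℕ} (ha : a < t) (hb : b < t)
    (h : t * x + a = t * y + b) : x = y ∧ a = b := by
  have ht : 0 < t := by omega
  have hx : (t * x + a) / t = x := by
    rw [Nat.mul_add_div ht, Nat.div_eq_of_lt ha, add_zero]
  have hy : (t * y + b) / t = y := by
    rw [Nat.mul_add_div ht, Nat.div_eq_of_lt hb, add_zero]
  have hxy : x = y := by rw [← hx, ← hy, h]
  subst hxy
  constructor
  · rfl
  · omega

private def sigmaFn (t h k : ℕ) : ℕ := if k + h + 1 < t then k + h + 1 else k + h + 1 - t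

private lemma sigmaFn_lt {t h k : ℕ} (ht : t = 2 * h + 1) (hk : k < t) : sigmaFn t h k < t := by
  unfold sigmaFn; split <;> omega

private lemma sigmaFn_w_lb {t h k : ℕ} (ht : t = 2 * h + 1) (hk : k < t) :
    h ≤ k + sigmaFn t h k := by
  unfold sigmaFn; split <;> omega

private lemma sigmaFn_w_ub {t h k : ℕ} (ht : t = 2 * h + 1) (hk : k < t) :
    k + sigmaFn t h k ≤ 3 * h := by
  unfold sigmaFn; split <;> omega

private lemma sigmaFn_inj {t h k1 k2 : ℕ} (ht : t = 2 * h + 1) (h1 : k1 < t) (h2 : k2 < t)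
    (h : sigmaFn t h k1 = sigmaFn t h k2) : k1 = k2 := by
  unfold sigmaFn at h; split at h <;> split at h <;> omega

private lemma sigmaFn_w_inj {t h k1 k2 : ℕ} (ht : t = 2 * h + 1) (h1 : k1 < t) (h2 : k2 < t)
    (h : k1 + sigmaFn t h k1 = k2 + sigmaFn t h k2) : k1 = k2 := by
  unfold sigmaFn at h; split at h <;> split at h <;> omega

section rank
variable {α : Type*} [DecidableEq α]

private noncomputable def rkF (s : Finset α) (F : α → ℕ) (v : α) : ℕ :=
  (s.filter (fun x => F x ≤ F v)).card

private lemma rkF_pos {s : Finset α} {F : α → ℕ} {v : α} (hv : v ∈ s) : 1 ≤ rkF s F v :=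
  Finset.card_pos.mpr ⟨v, Finset.mem_filter.mpr ⟨hv, le_refl _⟩⟩

private lemma rkF_le {s : Finset α} {F : α → ℕ} {v : α} : rkF s F v ≤ s.card :=
  Finset.card_le_card (Finset.filter_subset _ _)

private lemma rkF_mono {s : Finset α} {F : α → ℕ} {u v : α} (h : F u ≤ F v) :
    rkF s F u ≤ rkF s F v := by
  apply Finset.card_le_card
  intro x hx
  rw [Finset.mem_filter] at hx ⊢
  exact ⟨hx.1, le_trans hx.2 h⟩

private lemma rkF_strict {s : Finset α} {F : α → ℕ} {u v : α} (hv : v ∈ s) (h : F u < F v) :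
    rkF s F u < rkF s F v := by
  apply Finset.card_lt_card
  constructor
  · intro x hx
    rw [Finset.mem_filter] at hx ⊢
    exact ⟨hx.1, le_trans hx.2 h.le⟩
  · intro hsub
    have := hsub (Finset.mem_filter.mpr ⟨hv, le_refl _⟩)
    rw [Finset.mem_filter] at this
    omega
  
private lemma rkF_inj {s : Finset α} {F : α → ℕ} (hF : Function.Injective F) {u v : α}
    (hu : u ∈ s) (hv : v ∈ s) (h : rkF s F u = rkF s F v) : u = v := by
  rcases lt_trichotomy (F u) (F v) with hlt | heq | hlt
  · exact absurd h (by have := rkF_strict (s := s) hv hlt; omega)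
  · exact hF heq
  · exact absurd h (by have := rkF_strict (s := s) hu hlt; omega)

end rank

open SimpleGraph

section walkstruct
variable {W : Type*} [DecidableEq W] {H : SimpleGraph W}

private lemma indexOf_inj {l : List W} {x y : W}
    (hx : x ∈ l) (hy : y ∈ l) (h : l.idxOf x = l.idxOf y) : x = y := by
  have h1 := List.idxOf_get (a := x) (l := l) (List.idxOf_lt_length_iff.mpr hx)
  have h2 := List.idxOf_get (a := y) (l := l) (List.idxOf_lt_length_iff.mpr hy)
  rw [← h1, ← h2]
  congr 1
  exact Fin.ext h

private lemma single_edge_isPath {x y : W} (h : H.Adj x y) :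
    (Walk.cons h Walk.nil).IsPath := by
  simp [Walk.cons_isPath_iff, h.ne]

private lemma path2 {x y z : W} (h1 : H.Adj x y) (h2 : H.Adj y z) (hxz : x ≠ z) :
    (Walk.cons h1 (Walk.cons h2 Walk.nil)).IsPath := by
  rw [Walk.isPath_def]
  simp [h1.ne, h2.ne, hxz]

private lemma path3 {x y z w : W} (h1 : H.Adj x y) (h2 : H.Adj y z) (h3 : H.Adj z w)
    (hxz : x ≠ z) (hxw : x ≠ w) (hyw : y ≠ w) :
    (Walk.cons h1 (Walk.cons h2 (Walk.cons h3 Walk.nil))).IsPath := by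
  rw [Walk.isPath_def]
  simp [h1.ne, h2.ne, h3.ne, hxz, hxw, hyw]

private lemma adj_support_consecutive
    (huniq : ∀ v w : W, ∃! p : H.Walk v w, p.IsPath) :
    ∀ {a b : W} (P : H.Walk a b), P.IsPath → ∀ {x y}, H.Adj x y →
      x ∈ P.support → y ∈ P.support →
      P.support.idxOf y = P.support.idxOf x + 1 ∨
      P.support.idxOf x = P.support.idxOf y + 1 := by
  intro a b P
  induction P with
  | nil =>
    intro hp x y hxy hx hy
    simp only [Walk.support_nil, List.mem_singleton] at hx hy
    subst hx; subst hy
    exact absurd rfl hxy.ne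
  | @cons a c b h q ih =>
    intro hp x y hxy hx hy
    have hna : a ∉ q.support := by
      have := hp.support_nodup
      rw [Walk.support_cons] at this
      exact (List.nodup_cons.mp this).1
    have key : ∀ {z : W}, H.Adj a z → z ∈ q.support → z = c := by
      intro z haz hz
      have hzc : z ∈ (Walk.cons h q).support := by
        rw [Walk.support_cons]; exact List.mem_cons_of_mem _ hz
      have hp2 : ((Walk.cons h q).takeUntil z hzc).IsPath := hp.takeUntil hzc
      have heq := (huniq a z).unique (single_edge_isPath haz) hp2
      have hs := congrArg Walk.support (Walk.take_spec (Walk.cons h q) hzc)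
      rw [Walk.support_append, ← heq] at hs
      simp only [Walk.support_cons, Walk.support_nil] at hs
      rw [List.cons_append, List.singleton_append] at hs
      have hs2 : z :: ((Walk.cons h q).dropUntil z hzc).support.tail = q.support :=
        ((List.cons.injEq _ _ _ _).mp hs).2
      exact ((List.cons.injEq _ _ _ _).mp (hs2.trans q.support_eq_cons)).1
    rw [Walk.support_cons]
    have hidx : ∀ {z : W}, z ∈ q.support →
        (a :: q.support).idxOf z = q.support.idxOf z + 1 := by
      intro z hz
      have hz' : a ≠ z := fun hh => hna (hh ▸ hz)
      rw [List.idxOf_cons_ne _ hz']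
    rcases List.mem_cons.mp hx with hxa | hxq <;> rcases List.mem_cons.mp hy with hya | hyq
    · exact absurd (hxa.trans hya.symm) hxy.ne
    · have hyc : y = c := key (hxa ▸ hxy) hyq
      left
      have h0 : (a :: q.support).idxOf x = 0 := by
        rw [hxa]; exact List.idxOf_cons_self
      have h1 : q.support.idxOf y = 0 := by
        rw [hyc, q.support_eq_cons]; exact List.idxOf_cons_self
      have h2 := hidx hyq
      omega
    · have hxc : x = c := key (hya ▸ hxy.symm) hxq
      right
      have h0 : (a :: q.support).idxOf y = 0 := by
        rw [hya]; exact List.idxOf_cons_self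
      have h1 : q.support.idxOf x = 0 := by
        rw [hxc, q.support_eq_cons]; exact List.idxOf_cons_self
      have h2 := hidx hxq
      omega
    · have hih := ih hp.of_cons hxy hxq hyq
      have h2 := hidx hxq
      have h3 := hidx hyq
      omega

private lemma exists_path_between_support {a b x y : W} (P : H.Walk a b) (hp : P.IsPath)
    (hx : x ∈ P.support) (hy : y ∈ P.support) :
    ∃ Q : H.Walk x y, Q.IsPath ∧ ∀ z ∈ Q.support, z ∈ P.support := by
  by_cases hyd : y ∈ (P.dropUntil x hx).support
  · exact ⟨(P.dropUntil x hx).takeUntil y hyd, (hp.dropUntil hx).takeUntil hyd,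
      fun z hz => Walk.support_dropUntil_subset _ hx (Walk.support_takeUntil_subset _ hyd hz)⟩
  · have hyt : y ∈ (P.takeUntil x hx).support := by
      have hs := congrArg Walk.support (Walk.take_spec P hx)
      rw [Walk.support_append] at hs
      rw [← hs] at hy
      rcases List.mem_append.mp hy with h1 | h2
      · exact h1
      · exact absurd (List.mem_of_mem_tail h2) hyd
    exact ⟨((P.takeUntil x hx).dropUntil y hyt).reverse,
      ((hp.takeUntil hx).dropUntil hyt).reverse,
      fun z hz => by
        rw [Walk.support_reverse] at hz
        exact Walk.support_takeUntil_subset _ hx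
          (Walk.support_dropUntil_subset _ hyt (List.mem_reverse.mp hz))⟩

private lemma unique_nbr_of_not_mem_support
    (huniq : ∀ v w : W, ∃! p : H.Walk v w, p.IsPath)
    {a b : W} (P : H.Walk a b) (hp : P.IsPath)
    (hdom : ∀ v, v ∈ P.support ∨ ∃ u ∈ P.support, H.Adj u v)
    {v u w : W} (hv : v ∉ P.support) (hu : u ∈ P.support) (hadj : H.Adj u v)
    (hadj' : H.Adj w v) : w = u := by
  by_cases hw : w ∈ P.support
  · by_contra hne
    obtain ⟨Q, hQ, hQs⟩ := exists_path_between_support P hp hu hw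
    have hR : (Walk.cons hadj (Walk.cons hadj'.symm Walk.nil) : H.Walk u w).IsPath :=
      path2 hadj hadj'.symm (fun hh => hne hh.symm)
    have hQR := (huniq u w).unique hQ hR
    have hvQ : v ∈ Q.support := by rw [hQR]; simp
    exact hv (hQs v hvQ)
  · rcases hdom w with hw' | ⟨z, hz, hzw⟩
    · exact absurd hw' hw
    by_cases hzu : z = u
    · subst hzu
      have h1 : (Walk.cons hadj'.symm Walk.nil : H.Walk v w).IsPath :=
        single_edge_isPath hadj'.symm
      have h2 : (Walk.cons hadj.symm (Walk.cons hzw Walk.nil) : H.Walk v w).IsPath :=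
        path2 hadj.symm hzw hadj'.ne'
      have h12 := (huniq v w).unique h1 h2
      have hlen := congrArg Walk.length h12
      simp [Walk.length_cons] at hlen
    · exfalso
      obtain ⟨Q, hQ, hQs⟩ := exists_path_between_support P hp hu hz
      have hR : (Walk.cons hadj (Walk.cons hadj'.symm (Walk.cons hzw.symm Walk.nil)) :
          H.Walk u z).IsPath :=
        path3 hadj hadj'.symm hzw.symm (fun hh => hw (hh ▸ hu))
          (fun hh => hzu hh.symm) (fun hh => hv (hh ▸ hz))
      have hQR := (huniq u z).unique hQ hR
      have hvQ : v ∈ Q.support := by rw [hQR]; simp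
      exact hv (hQs v hvQ)

end walkstruct

private lemma cat_labeling {W : Type*} [Fintype W] (H : SimpleGraph W) (r : ℕ)
    (htree : H.IsTree)
    (hpath : ∃ (a b : W) (P : H.Walk a b), P.IsPath ∧
      ∀ v : W, v ∈ P.support ∨ ∃ u ∈ P.support, H.Adj u v)
    (A : Set W) (hAr : A.ncard = r)
    (hcross : ∀ u v : W, H.Adj u v → (u ∈ A ↔ v ∉ A)) :
    ∃ g : W → ℕ,
      (∀ v, 1 ≤ g v ∧ g v ≤ Fintype.card W) ∧
      Function.Injective g ∧
      (∀ u v, H.Adj u v → (g u ≤ r ∧ r + 1 ≤ g v) ∨ (g v ≤ r ∧ r + 1 ≤ g u)) ∧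
      (∀ u v u' v', H.Adj u v → H.Adj u' v' → g u + g v = g u' + g v' →
        s(u, v) = s(u', v')) := by
  classical
  obtain ⟨a, b, P, hP, hdom⟩ := hpath
  have huniq := htree.existsUnique_path
  have hex : ∀ v, v ∉ P.support → ∃ u, u ∈ P.support ∧ H.Adj u v := by
    intro v hv
    rcases hdom v with h | ⟨u, hu, huv⟩
    · exact absurd h hv
    · exact ⟨u, hu, huv⟩
  set nbF : W → W := fun v => if hv : v ∈ P.support then v else (hex v hv).choose with hnbF
  have nbF_spine : ∀ v ∈ P.support, nbF v = v := fun v hv => dif_pos hv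
  have nbF_mem : ∀ v, nbF v ∈ P.support := by
    intro v
    by_cases hv : v ∈ P.support
    · rw [nbF_spine v hv]; exact hv
    · show (if hv : v ∈ P.support then v else (hex v hv).choose) ∈ P.support
      rw [dif_neg hv]; exact (hex v hv).choose_spec.1
  have nbF_adj : ∀ v, v ∉ P.support → H.Adj (nbF v) v := by
    intro v hv
    show H.Adj (if hv : v ∈ P.support then v else (hex v hv).choose) v
    rw [dif_neg hv]; exact (hex v hv).choose_spec.2
  have nbF_unique : ∀ v, v ∉ P.support → ∀ w, H.Adj w v → w = nbF v := fun v hv w hw =>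
    unique_nbr_of_not_mem_support huniq P hP hdom hv (nbF_mem v) (nbF_adj v hv) hw
  set key : W → ℕ := fun v => P.support.idxOf (nbF v) with hkey
  set C := Fintype.card W with hC
  set emb : W → ℕ := fun v => ((Fintype.equivFin W) v : ℕ) with hemb
  have emb_lt : ∀ v, emb v < C := fun v => ((Fintype.equivFin W) v).isLt
  set keyN : W → ℕ := fun v => C * key v + emb v with hkeyN
  have keyN_inj : Function.Injective keyN := by
    intro u v h
    obtain ⟨h1, h2⟩ := block_inj (emb_lt u) (emb_lt v) h
    exact (Fintype.equivFin W).injective (Fin.ext h2)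
  have key_mono : ∀ {u v : W}, key u < key v → keyN u < keyN v := by
    intro u v h
    show C * key u + emb u < C * key v + emb v
    have e1 := emb_lt u
    have h2 : C * (key u + 1) ≤ C * key v := Nat.mul_le_mul_left C h
    have h3 : C * (key u + 1) = C * key u + C := by ring
    omega
  have key_le : ∀ {u v : W}, keyN u < keyN v → key u ≤ key v := by
    intro u v h
    by_contra hlt
    exact absurd (key_mono (u := v) (v := u) (by omega : key v < key u)) (by omega)
  have kspine : ∀ {v : W}, v ∈ P.support → key v = P.support.idxOf v := by
    intro v hv
    show P.support.idxOf (nbF v) = _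
    rw [nbF_spine v hv]
  have kinj : ∀ {u v : W}, u ∈ P.support → v ∈ P.support → key u = key v → u = v := by
    intro u v hu hv h
    rw [kspine hu, kspine hv] at h
    exact indexOf_inj hu hv h
  have EDGE : ∀ {u w : W}, H.Adj u w →
      (u ∈ P.support ∧ w ∈ P.support ∧ (key w = key u + 1 ∨ key u = key w + 1)) ∨
      (u ∈ P.support ∧ w ∉ P.support ∧ key w = key u) ∨
      (u ∉ P.support ∧ w ∈ P.support ∧ key u = key w) := by
    intro u w huw
    by_cases hu : u ∈ P.support <;> by_cases hw : w ∈ P.support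
    · left
      refine ⟨hu, hw, ?_⟩
      have hcons := adj_support_consecutive huniq P hP huw hu hw
      rw [kspine hu, kspine hw]
      omega
    · right; left
      refine ⟨hu, hw, ?_⟩
      have h1 : u = nbF w := nbF_unique w hw u huw
      show P.support.idxOf (nbF w) = key u
      rw [← h1, kspine hu]
    · right; right
      refine ⟨hu, hw, ?_⟩
      have h1 : w = nbF u := nbF_unique u hu w huw.symm
      show P.support.idxOf (nbF u) = key w
      rw [← h1, kspine hw]
    · exfalso
      have h1 : u = nbF w := nbF_unique w hw u huw
      exact hu (h1 ▸ nbF_mem w)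
  have SAMEKEY : ∀ {z z' x x' : W}, z ≠ z' → key z = key z' → (z ∈ A ↔ z' ∈ A) →
      H.Adj x z → H.Adj x' z' → x = x' := by
    intro z z' x x' hne hk hpart hxz hxz'
    by_cases hz : z ∈ P.support <;> by_cases hz' : z' ∈ P.support
    · exact absurd (kinj hz hz' hk) hne
    · exfalso
      have h1 : nbF z' = z := by
        apply indexOf_inj (nbF_mem z') hz
        have h2 : key z = P.support.idxOf z := kspine hz
        have h3 : key z' = P.support.idxOf (nbF z') := rfl
        omega
      have hadj : H.Adj z z' := h1 ▸ nbF_adj z' hz'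
      have := hcross z z' hadj
      tauto
    · exfalso
      have h1 : nbF z = z' := by
        apply indexOf_inj (nbF_mem z) hz'
        have h2 : key z' = P.support.idxOf z' := kspine hz'
        have h3 : key z = P.support.idxOf (nbF z) := rfl
        omega
      have hadj : H.Adj z' z := h1 ▸ nbF_adj z hz
      have := hcross z' z hadj
      tauto
    · have h1 : x = nbF z := nbF_unique z hz x hxz
      have h2 : x' = nbF z' := nbF_unique z' hz' x' hxz'
      have h3 : nbF z = nbF z' := indexOf_inj (nbF_mem z) (nbF_mem z') hk
      rw [h1, h2, h3]
  have hAfin : A.Finite := A.toFinite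
  have hBfin : (Aᶜ : Set W).Finite := Set.toFinite _
  set Af := hAfin.toFinset with hAf
  set Bf := hBfin.toFinset with hBf
  have hAcard : Af.card = r := by rw [← hAr, Set.ncard_eq_toFinset_card _ hAfin]
  set g : W → ℕ := fun v => if v ∈ A then rkF Af keyN v else r + rkF Bf keyN v with hg
  have hgA : ∀ {v}, v ∈ A → g v = rkF Af keyN v := fun {v} hv => if_pos hv
  have hgB : ∀ {v}, v ∉ A → g v = r + rkF Bf keyN v := fun {v} hv => if_neg hv
  have memAf : ∀ {v}, v ∈ A → v ∈ Af := fun {v} hv => hAfin.mem_toFinset.mpr hv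
  have memBf : ∀ {v}, v ∉ A → v ∈ Bf := fun {v} hv => hBfin.mem_toFinset.mpr hv
  have hrkA_le : ∀ v, rkF Af keyN v ≤ r := fun v => by
    have := rkF_le (s := Af) (F := keyN) (v := v)
    omega
  have hABcard : Af.card + Bf.card = C := by
    rw [← Set.ncard_eq_toFinset_card _ hAfin, ← Set.ncard_eq_toFinset_card _ hBfin,
      Set.ncard_add_ncard_compl, Nat.card_eq_fintype_card]
  have hbounds : ∀ v, 1 ≤ g v ∧ g v ≤ Fintype.card W := by
    intro v
    by_cases hv : v ∈ A
    · rw [hgA hv]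
      have h1 := rkF_pos (s := Af) (F := keyN) (memAf hv)
      have h2 := rkF_le (s := Af) (F := keyN) (v := v)
      omega
    · rw [hgB hv]
      have h1 := rkF_pos (s := Bf) (F := keyN) (memBf hv)
      have h2 := rkF_le (s := Bf) (F := keyN) (v := v)
      omega
  have hginj : Function.Injective g := by
    intro u v h
    by_cases hu : u ∈ A <;> by_cases hv : v ∈ A
    · rw [hgA hu, hgA hv] at h
      exact rkF_inj keyN_inj (memAf hu) (memAf hv) h
    · exfalso
      rw [hgA hu, hgB hv] at h
      have h1 := hrkA_le u
      have h2 := rkF_pos (s := Bf) (F := keyN) (memBf hv)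
      omega
    · exfalso
      rw [hgB hu, hgA hv] at h
      have h1 := hrkA_le v
      have h2 := rkF_pos (s := Bf) (F := keyN) (memBf hu)
      omega
    · rw [hgB hu, hgB hv] at h
      exact rkF_inj keyN_inj (memBf hu) (memBf hv) (by omega)
  have hcross' : ∀ u v, H.Adj u v → (g u ≤ r ∧ r + 1 ≤ g v) ∨ (g v ≤ r ∧ r + 1 ≤ g u) := by
    intro u v huv
    by_cases hu : u ∈ A
    · have hv : v ∉ A := (hcross u v huv).mp hu
      left
      rw [hgA hu, hgB hv]
      have h1 := hrkA_le u
      have h2 := rkF_pos (s := Bf) (F := keyN) (memBf hv)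
      omega
    · have hv : v ∈ A := by
        have := hcross u v huv
        tauto
      right
      rw [hgA hv, hgB hu]
      have h1 := hrkA_le v
      have h2 := rkF_pos (s := Bf) (F := keyN) (memBf hu)
      omega
  have core : ∀ {x y x' y' : W}, x ∈ A → x' ∈ A → H.Adj x y → H.Adj x' y' →
      keyN x < keyN x' → g x + g y = g x' + g y' → False := by
    intro x y x' y' hxA hx'A hxy hx'y' hlt hsum
    have hyA : y ∉ A := (hcross x y hxy).mp hxA
    have hy'A : y' ∉ A := (hcross x' y' hx'y').mp hx'A
    rw [hgA hxA, hgA hx'A, hgB hyA, hgB hy'A] at hsum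
    have hrx : rkF Af keyN x < rkF Af keyN x' := rkF_strict (memAf hx'A) hlt
    have hry : rkF Bf keyN y ≤ rkF Bf keyN y' := by
      by_cases hyy : y = y'
      · rw [hyy]
      · rcases lt_trichotomy (key y) (key y') with hk | hk | hk
        · exact rkF_mono (key_mono hk).le
        · have hxx : x = x' := SAMEKEY hyy hk (iff_of_false hyA hy'A) hxy hx'y'
          exact absurd hlt (by rw [hxx]; exact lt_irrefl _)
        · exfalso
          have hxx' : key x ≤ key x' := key_le hlt
          have e1 : key y ≤ key x + 1 ∧ key x ≤ key y + 1 := by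
            rcases EDGE hxy with ⟨_, _, hc⟩ | ⟨_, _, hc⟩ | ⟨_, _, hc⟩ <;> omega
          have e2 : key y' ≤ key x' + 1 ∧ key x' ≤ key y' + 1 := by
            rcases EDGE hx'y' with ⟨_, _, hc⟩ | ⟨_, _, hc⟩ | ⟨_, _, hc⟩ <;> omega
          by_cases hkxx : key x = key x'
          · have hne : x ≠ x' := fun hh => absurd hlt (by rw [hh]; exact lt_irrefl _)
            exact hyy (SAMEKEY hne hkxx (iff_of_true hxA hx'A) hxy.symm hx'y'.symm)
          · have hy1 : key y = key x + 1 := by omega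
            have hx'1 : key x' = key x + 1 := by omega
            have hyL : y ∈ P.support := by
              rcases EDGE hxy with ⟨_, h2, _⟩ | ⟨_, _, hc⟩ | ⟨_, _, hc⟩
              · exact h2
              · omega
              · omega
            have hx'L : x' ∈ P.support := by
              rcases EDGE hx'y' with ⟨h1, _, _⟩ | ⟨_, _, hc⟩ | ⟨_, _, hc⟩
              · exact h1
              · omega
              · omega
            have hx'y : x' = y := kinj hx'L hyL (by omega)
            rw [hx'y] at hx'A
            exact hyA hx'A
    omega
  have claim : ∀ {x y x' y' : W}, x ∈ A → x' ∈ A → H.Adj x y → H.Adj x' y' →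
      g x + g y = g x' + g y' → x = x' ∧ y = y' := by
    intro x y x' y' hxA hx'A hxy hx'y' hsum
    rcases lt_trichotomy (keyN x) (keyN x') with hlt | heq | hlt
    · exact absurd hsum (fun hs => core hxA hx'A hxy hx'y' hlt hs)
    · have hxx : x = x' := keyN_inj heq
      subst hxx
      refine ⟨rfl, ?_⟩
      have hyA : y ∉ A := (hcross x y hxy).mp hxA
      have hy'A : y' ∉ A := (hcross x y' hx'y').mp hxA
      rw [hgB hyA, hgB hy'A] at hsum
      exact rkF_inj keyN_inj (memBf hyA) (memBf hy'A) (by omega)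
    · exact absurd hsum.symm (fun hs => core hx'A hxA hx'y' hxy hlt hs)
  have main : ∀ u v u' v', H.Adj u v → H.Adj u' v' → g u + g v = g u' + g v' →
      s(u, v) = s(u', v') := by
    intro u v u' v' huv hu'v' hsum
    have hswap : ∀ {x y : W}, H.Adj x y → x ∉ A → y ∈ A := by
      intro x y hxy hx
      have := hcross x y hxy
      tauto
    by_cases huA : u ∈ A <;> by_cases hu'A : u' ∈ A
    · obtain ⟨h1, h2⟩ := claim huA hu'A huv hu'v' hsum
      rw [h1, h2]
    · obtain ⟨h1, h2⟩ := claim huA (hswap hu'v' hu'A) huv hu'v'.symm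
        (by omega : g u + g v = g v' + g u')
      rw [h1, h2, Sym2.eq_swap]
    · obtain ⟨h1, h2⟩ := claim (hswap huv huA) hu'A huv.symm hu'v'
        (by omega : g v + g u = g u' + g v')
      rw [Sym2.eq_swap, h1, h2]
    · obtain ⟨h1, h2⟩ := claim (hswap huv huA) (hswap hu'v' hu'A) huv.symm hu'v'.symm
        (by omega : g v + g u = g v' + g u')
      rw [h1, h2]
  exact ⟨g, hbounds, hginj, hcross', main⟩


/-- Every odd uniform army of caterpillars admits an edge-magic labeling:
if `G` is a graph with an odd number of connected components, each of which is a
caterpillar of the same type `(r, s)`, then `G` has an edge-magic labeling. -/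
theorem edge_magic_of_odd_uniform_army_of_caterpillars
    {V : Type*} [Fintype V] (G : SimpleGraph V) (r s : ℕ)
    (hodd : Odd (Nat.card G.ConnectedComponent))
    (hcat : ∀ c : G.ConnectedComponent, IsCaterpillar (G.induce c.supp) ∧
      HasType (G.induce c.supp) r s) :
    ∃ f k, IsEdgeMagicLabeling G f k := by
  classical
  obtain ⟨h, ht⟩ := hodd
  set t := Nat.card G.ConnectedComponent with htdef
  have htt : t = 2 * h + 1 := by omega
  haveI : Finite G.ConnectedComponent :=
    Finite.of_surjective G.connectedComponentMk (fun c => c.exists_rep)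
  haveI : Fintype G.ConnectedComponent := Fintype.ofFinite _
  let π : G.ConnectedComponent ≃ Fin t := Finite.equivFin _
  have hCdata : ∀ c : G.ConnectedComponent, ∃ g : ↥c.supp → ℕ,
      (∀ v, 1 ≤ g v ∧ g v ≤ Fintype.card ↥c.supp) ∧
      Function.Injective g ∧
      (∀ u v, (G.induce c.supp).Adj u v → (g u ≤ r ∧ r + 1 ≤ g v) ∨ (g v ≤ r ∧ r + 1 ≤ g u)) ∧
      (∀ u v u' v', (G.induce c.supp).Adj u v → (G.induce c.supp).Adj u' v' →
        g u + g v = g u' + g v' → s(u, v) = s(u', v')) := by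
    intro c
    obtain ⟨⟨htree, a, b, P, hP, hdom⟩, hrs, A, hA, hAc, hcross⟩ := hcat c
    exact cat_labeling _ r htree ⟨a, b, P, hP, hdom⟩ A hA hcross
  choose gl hgl using hCdata
  have hsupp_card : ∀ c : G.ConnectedComponent, Fintype.card ↥c.supp = r + s := by
    intro c
    obtain ⟨_, hrs, A, hA, hAc, _⟩ := hcat c
    have h2 := Set.ncard_add_ncard_compl A
    rw [hA, hAc, Nat.card_eq_fintype_card] at h2
    exact h2.symm
  set p := r + s with hpdef
  set n := Fintype.card V with hndef
  set m := G.edgeSet.ncard with hmdef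
  have hcardcomp : Fintype.card G.ConnectedComponent = t := Nat.card_eq_fintype_card.symm
  let eqv : V ≃ (Σ c : G.ConnectedComponent, ↥c.supp) :=
    { toFun := fun v => ⟨G.connectedComponentMk v, ⟨v, rfl⟩⟩
      invFun := fun x => ↑x.2
      left_inv := fun v => rfl
      right_inv := by
        rintro ⟨c, v, hv⟩
        obtain rfl := (SimpleGraph.ConnectedComponent.mem_supp_iff c v).mp hv
        rfl }
  have hn : n = t * p := by
    rw [hndef, Fintype.card_congr eqv, Fintype.card_sigma,
      Finset.sum_congr rfl (fun c _ => hsupp_card c), Finset.sum_const, Finset.card_univ,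
      hcardcomp, smul_eq_mul]
  have hp_pos : 1 ≤ p := by
    have hne : Nonempty G.ConnectedComponent := by
      rcases isEmpty_or_nonempty G.ConnectedComponent with he | hne
      · exfalso
        have : Nat.card G.ConnectedComponent = 0 := by simp
        omega
      · exact hne
    obtain ⟨c⟩ := hne
    obtain ⟨v, rfl⟩ := c.exists_rep
    have h1 := hsupp_card (G.connectedComponentMk v)
    have h2 : 0 < Fintype.card ↥(G.connectedComponentMk v).supp :=
      Fintype.card_pos_iff.mpr ⟨⟨v, rfl⟩⟩
    omega
  -- edge counting
  have hind_card : ∀ c : G.ConnectedComponent,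
      ((G.induce c.supp).edgeSet.toFinite.toFinset).card + 1 = p := by
    intro c
    haveI : Fintype ↥(G.induce c.supp).edgeSet := Fintype.ofFinite _
    have htree := (hcat c).1.1
    have h1 := htree.card_edgeFinset
    rw [hsupp_card c] at h1
    rw [← h1]
    congr 1
    apply Finset.card_bij (fun e _ => e)
    · intro e he
      rw [Set.Finite.mem_toFinset] at he
      rwa [SimpleGraph.mem_edgeFinset]
    · intro e _ e' _ hee
      exact hee
    · intro e he
      refine ⟨e, ?_, rfl⟩
      rw [Set.Finite.mem_toFinset]
      rwa [SimpleGraph.mem_edgeFinset] at he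
  set F : G.ConnectedComponent → Finset (Sym2 V) :=
    fun c => ((G.induce c.supp).edgeSet.toFinite.toFinset).image
      (Sym2.map (Subtype.val : ↥c.supp → V)) with hFdef
  have hFcard : ∀ c, (F c).card + 1 = p := by
    intro c
    rw [hFdef]
    rw [Finset.card_image_of_injective _ (Sym2.map.injective Subtype.val_injective)]
    exact hind_card c
  have hmemF : ∀ (c : G.ConnectedComponent) (e : Sym2 V),
      e ∈ F c ↔ ∃ x y : V, x ∈ c.supp ∧ y ∈ c.supp ∧ G.Adj x y ∧ e = s(x, y) := by
    intro c e
    rw [hFdef, Finset.mem_image]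
    constructor
    · rintro ⟨e', he', rfl⟩
      rw [Set.Finite.mem_toFinset] at he'
      induction e' using Sym2.ind with
      | _ u v =>
        rw [SimpleGraph.mem_edgeSet, SimpleGraph.comap_adj] at he'
        exact ⟨↑u, ↑v, u.2, v.2, he', by rw [Sym2.map_pair_eq]⟩
    · rintro ⟨x, y, hx, hy, hadj, rfl⟩
      refine ⟨s(⟨x, hx⟩, ⟨y, hy⟩), ?_, by rw [Sym2.map_pair_eq]⟩
      rw [Set.Finite.mem_toFinset, SimpleGraph.mem_edgeSet, SimpleGraph.comap_adj]
      exact hadj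
  have hunion : G.edgeSet.toFinite.toFinset = Finset.univ.biUnion F := by
    ext e
    induction e using Sym2.ind with
    | _ u v =>
      rw [Set.Finite.mem_toFinset, SimpleGraph.mem_edgeSet]
      simp only [Finset.mem_biUnion, Finset.mem_univ, true_and]
      constructor
      · intro hadj
        refine ⟨G.connectedComponentMk u, (hmemF _ _).mpr ⟨u, v, rfl, ?_, hadj, rfl⟩⟩
        exact SimpleGraph.ConnectedComponent.eq.mpr hadj.symm.reachable
      · rintro ⟨c, hc⟩
        obtain ⟨x, y, hx, hy, hadj, he⟩ := (hmemF c _).mp hc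
        rcases Sym2.eq_iff.mp he with ⟨h1, h2⟩ | ⟨h1, h2⟩
        · rw [h1, h2]; exact hadj
        · rw [h1, h2]; exact hadj.symm
  have hdisj : ∀ c ∈ Finset.univ, ∀ c' ∈ Finset.univ,
      c ≠ c' → Disjoint (F c) (F (c' : G.ConnectedComponent)) := by
    intro c _ c' _ hne
    rw [Finset.disjoint_left]
    intro e hec hec'
    obtain ⟨x, y, hx, hy, _, rfl⟩ := (hmemF c _).mp hec
    obtain ⟨x', y', hx', hy', _, he⟩ := (hmemF c' _).mp hec'
    have hx1 : G.connectedComponentMk x = c := hx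
    apply hne
    rcases Sym2.eq_iff.mp he with ⟨h1, _⟩ | ⟨h1, _⟩
    · have hx2 : G.connectedComponentMk x' = c' := hx'
      rw [← hx1, ← hx2, h1]
    · have hy2 : G.connectedComponentMk y' = c' := hy'
      rw [← hx1, ← hy2, h1]
  have hmn : m + t = n := by
    have hm1 : m = (G.edgeSet.toFinite.toFinset).card := Set.ncard_eq_toFinset_card _ _
    rw [hm1, hunion, Finset.card_biUnion hdisj,
      Finset.sum_congr rfl (fun c _ => (by have := hFcard c; omega : (F c).card = p - 1)),
      Finset.sum_const, Finset.card_univ, hcardcomp, smul_eq_mul, hn]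
    have h1 : p - 1 + 1 = p := by omega
    calc t * (p - 1) + t = t * (p - 1 + 1) := by ring
      _ = t * p := by rw [h1]
  -- the labeling
  set cmp : V → G.ConnectedComponent := fun v => G.connectedComponentMk v with hcmpdef
  have memown : ∀ v : V, v ∈ (cmp v).supp := fun v => rfl
  set gg : V → ℕ := fun v => gl (cmp v) ⟨v, memown v⟩ with hggdef
  set idx : V → ℕ := fun v => (π (cmp v) : ℕ) with hidxdef
  have idx_lt : ∀ v, idx v < t := fun v => (π (cmp v)).isLt
  set res : V → ℕ := fun v => if gg v ≤ r then idx v else sigmaFn t h (idx v) with hresdef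
  set L : V → ℕ := fun v => t * (gg v - 1) + res v + 1 with hLdef
  have hgg : ∀ (c : G.ConnectedComponent) (v : V) (hv : v ∈ c.supp), gg v = gl c ⟨v, hv⟩ := by
    intro c v hv
    have hcv : cmp v = c := (SimpleGraph.ConnectedComponent.mem_supp_iff c v).mp hv
    subst hcv
    rfl
  have gg_bounds : ∀ v, 1 ≤ gg v ∧ gg v ≤ p := by
    intro v
    have h1 := (hgl (cmp v)).1 ⟨v, memown v⟩
    rw [hsupp_card (cmp v)] at h1
    exact h1
  have res_lt : ∀ v, res v < t := by
    intro v
    show (if gg v ≤ r then idx v else sigmaFn t h (idx v)) < t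
    split
    · exact idx_lt v
    · exact sigmaFn_lt htt (idx_lt v)
  have L_bounds : ∀ v, 1 ≤ L v ∧ L v ≤ n := by
    intro v
    have h1 := gg_bounds v
    have h2 := res_lt v
    have h3 : t * (gg v - 1) + t ≤ t * p := by
      have h4 : gg v - 1 + 1 ≤ p := by omega
      calc t * (gg v - 1) + t = t * (gg v - 1 + 1) := by ring
        _ ≤ t * p := Nat.mul_le_mul_left t h4
    have h5 : L v = t * (gg v - 1) + res v + 1 := rfl
    omega
  have L_inj : Function.Injective L := by
    intro u v huv
    have h1 := gg_bounds u
    have h2 := gg_bounds v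
    have h3 := res_lt u
    have h4 := res_lt v
    have h5 : L u = t * (gg u - 1) + res u + 1 := rfl
    have h6 : L v = t * (gg v - 1) + res v + 1 := rfl
    have heq : gg u - 1 = gg v - 1 ∧ res u = res v := by
      apply block_inj h3 h4
      omega
    have hggeq : gg u = gg v := by omega
    have hres : res u = res v := heq.2
    have compeq : cmp u = cmp v → u = v := by
      intro hcc
      have hvmem : v ∈ (cmp u).supp := hcc ▸ memown v
      have hglequ : gl (cmp u) ⟨u, memown u⟩ = gl (cmp u) ⟨v, hvmem⟩ := by
        rw [← hgg (cmp u) u (memown u), ← hgg (cmp u) v hvmem]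
        exact hggeq
      have hsub := (hgl (cmp u)).2.1 hglequ
      exact congrArg Subtype.val hsub
    by_cases hle : gg u ≤ r
    · have hle' : gg v ≤ r := by omega
      have e1 : res u = idx u := if_pos hle
      have e2 : res v = idx v := if_pos hle'
      have hidx : idx u = idx v := by omega
      exact compeq (π.injective (Fin.ext hidx))
    · have hle' : ¬ gg v ≤ r := by omega
      have e1 : res u = sigmaFn t h (idx u) := if_neg hle
      have e2 : res v = sigmaFn t h (idx v) := if_neg hle'
      have hidx : idx u = idx v :=
        sigmaFn_inj htt (idx_lt u) (idx_lt v) (by omega)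
      exact compeq (π.injective (Fin.ext hidx))
  set ES : Sym2 V → ℕ := Sym2.lift ⟨fun u v => L u + L v, fun u v => by dsimp; ring⟩
    with hESdef
  have hES : ∀ u v : V, ES s(u, v) = L u + L v := fun u v => rfl
  set K := n + m + (t * r + h + 2) with hKdef
  set f : V ⊕ ↥G.edgeSet → ℕ := Sum.elim L (fun e => K - ES ↑e) with hfdef
  -- edge facts
  have cmp_adj : ∀ {u v : V}, G.Adj u v → cmp v = cmp u := by
    intro u v huv
    exact SimpleGraph.ConnectedComponent.eq.mpr huv.symm.reachable
  have edge_norm : ∀ u v : V, G.Adj u v → ∃ x y : V, s(x, y) = s(u, v) ∧ G.Adj x y ∧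
      gg x ≤ r ∧ r + 1 ≤ gg y := by
    intro u v huv
    have hvmem : v ∈ (cmp u).supp := cmp_adj huv
    have hadj : (G.induce (cmp u).supp).Adj ⟨u, memown u⟩ ⟨v, hvmem⟩ := by
      rw [SimpleGraph.comap_adj]
      exact huv
    have hcr := (hgl (cmp u)).2.2.1 ⟨u, memown u⟩ ⟨v, hvmem⟩ hadj
    rw [← hgg (cmp u) u (memown u), ← hgg (cmp u) v hvmem] at hcr
    rcases hcr with ⟨h1, h2⟩ | ⟨h1, h2⟩
    · exact ⟨u, v, rfl, huv, h1, h2⟩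
    · exact ⟨v, u, Sym2.eq_swap, huv.symm, h1, h2⟩
  have edge_sum : ∀ x y : V, G.Adj x y → gg x ≤ r → r + 1 ≤ gg y →
      L x + L y = t * (gg x + gg y - 2) + (idx x + sigmaFn t h (idx x)) + 2 := by
    intro x y hxy h1 h2
    have hb1 := gg_bounds x
    have hb2 := gg_bounds y
    have hidxy : idx y = idx x := by
      show (π (cmp y) : ℕ) = (π (cmp x) : ℕ)
      rw [cmp_adj hxy.symm]
    have e1 : L x = t * (gg x - 1) + idx x + 1 := by
      have : res x = idx x := if_pos h1
      show t * (gg x - 1) + res x + 1 = _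
      omega
    have e2 : L y = t * (gg y - 1) + sigmaFn t h (idx x) + 1 := by
      have : res y = sigmaFn t h (idx y) := if_neg (by omega)
      show t * (gg y - 1) + res y + 1 = _
      rw [this, hidxy]
    have hmul : t * (gg x - 1) + t * (gg y - 1) = t * ((gg x - 1) + (gg y - 1)) := by ring
    have hQ : (gg x - 1) + (gg y - 1) = gg x + gg y - 2 := by omega
    rw [e1, e2]
    rw [hQ] at hmul
    omega
  have ES_bounds : ∀ u v : V, G.Adj u v →
      t * r + h + 2 ≤ L u + L v ∧ L u + L v ≤ m + t * r + h + 1 := by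
    intro u v huv
    obtain ⟨x, y, hxy_eq, hxy, hx, hy⟩ := edge_norm u v huv
    have hsym : L u + L v = L x + L y := by
      have hc := congrArg ES hxy_eq
      rw [hES, hES] at hc
      exact hc.symm
    rw [hsym]
    have hsum := edge_sum x y hxy hx hy
    have hb1 := gg_bounds x
    have hb2 := gg_bounds y
    have hklt := idx_lt x
    have hw1 := sigmaFn_w_lb htt hklt
    have hw2 := sigmaFn_w_ub htt hklt
    have hr1 : 1 ≤ r := by omega
    constructor
    · have hQ : r ≤ gg x + gg y - 2 := by omega
      have h5 := Nat.mul_le_mul_left t hQ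
      omega
    · have hQ : gg x + gg y - 2 ≤ p + r - 2 := by omega
      have h5 := Nat.mul_le_mul_left t hQ
      have h6 : t * (p + r - 2) + t + t = n + t * r := by
        rw [hn]
        have h7 : (p + r - 2) + 2 = p + r := by omega
        calc t * (p + r - 2) + t + t = t * ((p + r - 2) + 2) := by ring
          _ = t * (p + r) := by rw [h7]
          _ = t * p + t * r := by ring
      omega
  have ES_inj : ∀ u v u' v' : V, G.Adj u v → G.Adj u' v' →
      L u + L v = L u' + L v' → s(u, v) = s(u', v') := by
    intro u v u' v' h1 h2 heq
    obtain ⟨x, y, hxy_eq, hxy, hx, hy⟩ := edge_norm u v h1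
    obtain ⟨x', y', hxy_eq', hxy', hx', hy'⟩ := edge_norm u' v' h2
    have hsym : L x + L y = L u + L v := by
      have hc := congrArg ES hxy_eq
      rw [hES, hES] at hc
      exact hc
    have hsym' : L x' + L y' = L u' + L v' := by
      have hc := congrArg ES hxy_eq'
      rw [hES, hES] at hc
      exact hc
    rw [← hxy_eq, ← hxy_eq']
    have heq2 : L x + L y = L x' + L y' := by omega
    have hsum := edge_sum x y hxy hx hy
    have hsum' := edge_sum x' y' hxy' hx' hy'
    have hklt := idx_lt x
    have hk'lt := idx_lt x'
    have hw1 := sigmaFn_w_lb htt hklt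
    have hw2 := sigmaFn_w_ub htt hklt
    have hw1' := sigmaFn_w_lb htt hk'lt
    have hw2' := sigmaFn_w_ub htt hk'lt
    have hb1 := gg_bounds x
    have hb2 := gg_bounds y
    have hb1' := gg_bounds x'
    have hb2' := gg_bounds y'
    have hblock : t * (gg x + gg y - 2) + (idx x + sigmaFn t h (idx x) - h) =
        t * (gg x' + gg y' - 2) + (idx x' + sigmaFn t h (idx x') - h) := by omega
    obtain ⟨hQ, hw_eq⟩ := block_inj (by omega) (by omega) hblock
    have hk_eq : idx x = idx x' := sigmaFn_w_inj htt hklt hk'lt (by omega)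
    have hcomp : cmp x = cmp x' := π.injective (Fin.ext hk_eq)
    have hggsum : gg x + gg y = gg x' + gg y' := by omega
    have my : y ∈ (cmp x).supp := cmp_adj hxy
    have mx' : x' ∈ (cmp x).supp := by
      rw [hcomp]; exact memown x'
    have my' : y' ∈ (cmp x).supp := by
      rw [hcomp]; exact cmp_adj hxy'
    have hadj1 : (G.induce (cmp x).supp).Adj ⟨x, memown x⟩ ⟨y, my⟩ := by
      rw [SimpleGraph.comap_adj]; exact hxy
    have hadj2 : (G.induce (cmp x).supp).Adj ⟨x', mx'⟩ ⟨y', my'⟩ := by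
      rw [SimpleGraph.comap_adj]; exact hxy'
    have hfin := (hgl (cmp x)).2.2.2 _ _ _ _ hadj1 hadj2 (by
      rw [← hgg (cmp x) x (memown x), ← hgg (cmp x) y my,
        ← hgg (cmp x) x' mx', ← hgg (cmp x) y' my']
      exact hggsum)
    have hmap := congrArg (Sym2.map (Subtype.val : ↥(cmp x).supp → V)) hfin
    rw [Sym2.map_pair_eq, Sym2.map_pair_eq] at hmap
    exact hmap
  have inr_bounds : ∀ e : ↥G.edgeSet, n + 1 ≤ K - ES ↑e ∧ K - ES ↑e ≤ n + m := by
    rintro ⟨q, hq⟩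
    induction q using Sym2.ind with
    | _ u v =>
      rw [SimpleGraph.mem_edgeSet] at hq
      have hb := ES_bounds u v hq
      have he : ES ↑(⟨s(u, v), (G.mem_edgeSet).mpr hq⟩ : ↥G.edgeSet) = L u + L v := hES u v
      show n + 1 ≤ K - ES s(u, v) ∧ K - ES s(u, v) ≤ n + m
      rw [hES u v]
      omega
  have hfinj : Function.Injective f := by
    intro a b hab
    match a, b with
    | Sum.inl u, Sum.inl v =>
      have : L u = L v := hab
      rw [L_inj this]
    | Sum.inl u, Sum.inr e =>
      exfalso
      have h1 : L u = K - ES ↑e := hab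
      have h2 := L_bounds u
      have h3 := inr_bounds e
      omega
    | Sum.inr e, Sum.inl u =>
      exfalso
      have h1 : K - ES ↑e = L u := hab
      have h2 := L_bounds u
      have h3 := inr_bounds e
      omega
    | Sum.inr e1, Sum.inr e2 =>
      have h1 : K - ES ↑e1 = K - ES ↑e2 := hab
      have hESeq : ES ↑e1 = ES ↑e2 := by
        have hb1 := inr_bounds e1
        have hb2 := inr_bounds e2
        have hK1 : ES ↑e1 ≤ K := by
          rcases e1 with ⟨q, hq⟩
          induction q using Sym2.ind with
          | _ u v =>
            rw [SimpleGraph.mem_edgeSet] at hq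
            have hb := ES_bounds u v hq
            show ES s(u, v) ≤ K
            rw [hES u v]
            omega
        have hK2 : ES ↑e2 ≤ K := by
          rcases e2 with ⟨q, hq⟩
          induction q using Sym2.ind with
          | _ u v =>
            rw [SimpleGraph.mem_edgeSet] at hq
            have hb := ES_bounds u v hq
            show ES s(u, v) ≤ K
            rw [hES u v]
            omega
        omega
      congr 1
      rcases e1 with ⟨q1, hq1⟩
      rcases e2 with ⟨q2, hq2⟩
      apply Subtype.ext
      show q1 = q2
      have hq1' := hq1
      have hq2' := hq2
      revert hESeq
      induction q1 using Sym2.ind with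
      | _ u v =>
        induction q2 using Sym2.ind with
        | _ u' v' =>
          intro hESeq
          rw [SimpleGraph.mem_edgeSet] at hq1' hq2'
          apply ES_inj u v u' v' hq1' hq2'
          have e1 : ES s(u, v) = L u + L v := hES u v
          have e2 : ES s(u', v') = L u' + L v' := hES u' v'
          rw [← e1, ← e2]
          exact hESeq
  have hmapsto : ∀ x : V ⊕ ↥G.edgeSet, f x ∈ Set.Icc 1 (n + m) := by
    intro x
    match x with
    | Sum.inl u =>
      have h1 := L_bounds u
      have h2 : f (Sum.inl u) = L u := rfl
      exact Set.mem_Icc.mpr ⟨by omega, by omega⟩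
    | Sum.inr e =>
      have h1 := inr_bounds e
      have h2 : f (Sum.inr e) = K - ES ↑e := rfl
      exact Set.mem_Icc.mpr ⟨by omega, by omega⟩
  have hcardD : Nat.card (V ⊕ ↥G.edgeSet) = n + m := by
    rw [Nat.card_sum, Nat.card_eq_fintype_card, Nat.card_coe_set_eq]
  have himg : f '' Set.univ = Set.Icc 1 (n + m) := by
    apply Set.eq_of_subset_of_ncard_le
    · rintro z ⟨x, _, rfl⟩
      exact hmapsto x
    · rw [Set.ncard_image_of_injOn (Function.Injective.injOn hfinj),
        Set.ncard_univ, hcardD, ← Finset.coe_Icc, Set.ncard_coe_finset, Nat.card_Icc]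
      omega
    · exact Set.finite_Icc _ _
  refine ⟨f, K, ?_, ?_⟩
  · exact ⟨fun x _ => hmapsto x, Function.Injective.injOn hfinj, by
      rw [← himg]
      exact fun z hz => hz⟩
  · intro u v huv
    have hb := ES_bounds u v huv
    show L u + L v + (K - ES s(u, v)) = K
    rw [hES u v]
    omega
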